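/- (Maximum principle for the quotient.) Let N ≥ 2 be an integer, p > 1 real, 0 < r₀ < R₀ ≤ ∞, and let V be a continuous potential on [r₀,R₀). Let u be a positive strictly monotone C² radial subsolution and v a positive strictly monotone C² radial supersolution of −Δ_p u − V|u|^{p−2}u = 0 on [r₀,R₀), and assume in addition that either u is a strict radial subsolution or v is a strict radial supersolution. If (u/v)'(ρ) = 0 for some ρ ∈ (r₀,R₀), then (u/v)''(ρ) > 0. In particular, u/v has no local maximum point in (r₀,R₀). -/

import Mathlib

/-- The ordinary differential operator `L u (r) = (p-1) u''(r) + ((N-1)/r) u'(r)`,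
so that for a radial function the p-Laplacian is `Δ_p u = |u'(r)|^{p-2} L u (r)`. -/
noncomputable def Lrad (N : ℕ) (p : ℝ) (u : ℝ → ℝ) (r : ℝ) : ℝ :=
  (p - 1) * deriv (deriv u) r + (((N : ℝ) - 1) / r) * deriv u r

/-- Maximum principle for the quotient of a positive strictly monotone radial
subsolution `u` and a positive strictly monotone radial supersolution `v` of
`-Δ_p u - V |u|^{p-2} u = 0`, one of which is strict: at any interior critical point of
`u/v` the second derivative is positive; in particular `u/v` has no local maximum. -/
theorem quotient_maximum_principle (N : ℕ) (hN : 2 ≤ N) (p : ℝ) (hp : 1 < p)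
    (r₀ : ℝ) (R₀ : EReal) (hr₀ : 0 < r₀) (hR : (r₀ : EReal) < R₀)
    (V u v : ℝ → ℝ)
    (hVcont : ContinuousOn V {r : ℝ | r₀ ≤ r ∧ (r : EReal) < R₀})
    (huC2 : ContDiffOn ℝ 2 u {r : ℝ | r₀ ≤ r ∧ (r : EReal) < R₀})
    (hvC2 : ContDiffOn ℝ 2 v {r : ℝ | r₀ ≤ r ∧ (r : EReal) < R₀})
    (hu0 : ∀ r : ℝ, r₀ ≤ r → (r : EReal) < R₀ → 0 < u r)
    (hv0 : ∀ r : ℝ, r₀ ≤ r → (r : EReal) < R₀ → 0 < v r)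
    (humono : (∀ r : ℝ, r₀ ≤ r → (r : EReal) < R₀ → deriv u r < 0) ∨
              (∀ r : ℝ, r₀ ≤ r → (r : EReal) < R₀ → 0 < deriv u r))
    (hvmono : (∀ r : ℝ, r₀ ≤ r → (r : EReal) < R₀ → deriv v r < 0) ∨
              (∀ r : ℝ, r₀ ≤ r → (r : EReal) < R₀ → 0 < deriv v r))
    (husub : ∀ r : ℝ, r₀ ≤ r → (r : EReal) < R₀ →
      -(|deriv u r| ^ (p - 2) * Lrad N p u r) - V r * (|u r| ^ (p - 2) * u r) ≤ 0)
    (hvsup : ∀ r : ℝ, r₀ ≤ r → (r : EReal) < R₀ →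
      0 ≤ -(|deriv v r| ^ (p - 2) * Lrad N p v r) - V r * (|v r| ^ (p - 2) * v r))
    (hstrict :
      (∀ r : ℝ, r₀ ≤ r → (r : EReal) < R₀ →
        -(|deriv u r| ^ (p - 2) * Lrad N p u r) - V r * (|u r| ^ (p - 2) * u r) < 0) ∨
      (∀ r : ℝ, r₀ ≤ r → (r : EReal) < R₀ →
        0 < -(|deriv v r| ^ (p - 2) * Lrad N p v r) - V r * (|v r| ^ (p - 2) * v r))) :
    (∀ ρ : ℝ, r₀ < ρ → (ρ : EReal) < R₀ → deriv (fun r => u r / v r) ρ = 0 →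
      0 < deriv (deriv (fun r => u r / v r)) ρ) ∧
    (∀ ρ : ℝ, r₀ < ρ → (ρ : EReal) < R₀ → ¬ IsLocalMax (fun r => u r / v r) ρ) := by
  set S : Set ℝ := {r : ℝ | r₀ ≤ r ∧ (r : EReal) < R₀} with hSdef
  set U : Set ℝ := {r : ℝ | r₀ < r ∧ (r : EReal) < R₀} with hUdef
  have hUopen : IsOpen U := by
    have hU : U = Set.Ioi r₀ ∩ ((↑) : ℝ → EReal) ⁻¹' (Set.Iio R₀) := by
      ext r; simp [hUdef, Set.mem_Ioi, Set.mem_Iio]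
    rw [hU]
    exact isOpen_Ioi.inter (isOpen_Iio.preimage continuous_coe_real_ereal)
  have hUsub : U ⊆ S := fun r hr => ⟨le_of_lt hr.1, hr.2⟩
  have hSnhds : ∀ {r : ℝ}, r ∈ U → S ∈ nhds r := fun hr =>
    Filter.mem_of_superset (hUopen.mem_nhds hr) hUsub
  -- first derivatives
  have hud : ∀ r ∈ U, HasDerivAt u (deriv u r) r := fun r hr =>
    ((huC2.contDiffAt (hSnhds hr)).differentiableAt (by norm_num)).hasDerivAt
  have hvd : ∀ r ∈ U, HasDerivAt v (deriv v r) r := fun r hr =>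
    ((hvC2.contDiffAt (hSnhds hr)).differentiableAt (by norm_num)).hasDerivAt
  -- second derivatives
  have huC1 : ContDiffOn ℝ 1 (deriv u) U :=
    (huC2.mono hUsub).deriv_of_isOpen hUopen (by norm_num)
  have hvC1 : ContDiffOn ℝ 1 (deriv v) U :=
    (hvC2.mono hUsub).deriv_of_isOpen hUopen (by norm_num)
  have hudd : ∀ r ∈ U, HasDerivAt (deriv u) (deriv (deriv u) r) r := fun r hr =>
    ((huC1.contDiffAt (hUopen.mem_nhds hr)).differentiableAt (by norm_num)).hasDerivAt
  have hvdd : ∀ r ∈ U, HasDerivAt (deriv v) (deriv (deriv v) r) r := fun r hr =>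
    ((hvC1.contDiffAt (hUopen.mem_nhds hr)).differentiableAt (by norm_num)).hasDerivAt
  set f : ℝ → ℝ := fun r => u r / v r with hfdef
  set g : ℝ → ℝ := fun r => (deriv u r * v r - u r * deriv v r) / (v r) ^ 2 with hgdef
  have hvne : ∀ r ∈ U, v r ≠ 0 := fun r hr => ne_of_gt (hv0 r (hUsub hr).1 hr.2)
  have hfd : ∀ r ∈ U, HasDerivAt f (g r) r := fun r hr =>
    (hud r hr).div (hvd r hr) (hvne r hr)
  have hderivf : ∀ r ∈ U, deriv f r = g r := fun r hr => (hfd r hr).deriv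
  -- derivative of g
  have hDg : ∀ r ∈ U, HasDerivAt g
      (((deriv (deriv u) r * v r - u r * deriv (deriv v) r) * (v r) ^ 2 -
        (deriv u r * v r - u r * deriv v r) * (2 * v r * deriv v r)) / ((v r) ^ 2) ^ 2) r := by
    intro r hr
    have h := (((hudd r hr).mul (hvd r hr)).sub ((hud r hr).mul (hvdd r hr))).div
      ((hvd r hr).pow 2) (pow_ne_zero 2 (hvne r hr))
    have hg : g = (deriv u * v - u * deriv v) / v ^ 2 := by ext x; simp [hgdef]
    rw [hg]
    refine h.congr_deriv ?_
    simp only [Pi.pow_apply, Pi.sub_apply, Pi.mul_apply]; push_cast; ring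
  -- the key second-derivative computation
  have key : ∀ ρ : ℝ, ρ ∈ U → deriv f ρ = 0 → 0 < deriv (deriv f) ρ := by
    intro ρ hρ hcrit
    have hle : r₀ ≤ ρ := le_of_lt hρ.1
    have hlt : (ρ : EReal) < R₀ := hρ.2
    have ha : 0 < u ρ := hu0 ρ hle hlt
    have hb : 0 < v ρ := hv0 ρ hle hlt
    have hbne : v ρ ≠ 0 := ne_of_gt hb
    -- critical point relation
    have hgρ : g ρ = (deriv u ρ * v ρ - u ρ * deriv v ρ) / (v ρ) ^ 2 := rfl
    have h0 : (deriv u ρ * v ρ - u ρ * deriv v ρ) / (v ρ) ^ 2 = 0 := by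
      rw [← hgρ, ← hderivf ρ hρ]; exact hcrit
    have hc : deriv u ρ * v ρ - u ρ * deriv v ρ = 0 := by
      rcases div_eq_zero_iff.mp h0 with h | h
      · exact h
      · exact absurd h (pow_ne_zero 2 hbne)
    -- notation
    set k : ℝ := u ρ / v ρ with hkdef
    have hk : 0 < k := div_pos ha hb
    have hab : u ρ = k * v ρ := by rw [hkdef, div_mul_cancel₀ _ hbne]
    have ha1 : deriv u ρ = k * deriv v ρ := by
      rw [hkdef, div_mul_eq_mul_div, eq_div_iff hbne]; linarith
    have hb1ne : deriv v ρ ≠ 0 := by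
      rcases hvmono with h | h
      · exact ne_of_lt (h ρ hle hlt)
      · exact ne_of_gt (h ρ hle hlt)
    have hkp2 : (0:ℝ) < k ^ (p - 2) := Real.rpow_pos_of_pos hk _
    have hb1p : (0:ℝ) < |deriv v ρ| ^ (p - 2) :=
      Real.rpow_pos_of_pos (abs_pos.mpr hb1ne) _
    -- rewrite rules
    have habs : |deriv u ρ| = k * |deriv v ρ| := by
      rw [ha1, abs_mul, abs_of_pos hk]
    have hr1 : |deriv u ρ| ^ (p - 2) = k ^ (p - 2) * |deriv v ρ| ^ (p - 2) := by
      rw [habs, Real.mul_rpow hk.le (abs_nonneg _)]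
    have hr2 : |u ρ| ^ (p - 2) * u ρ = (k ^ (p - 2) * k) * (|v ρ| ^ (p - 2) * v ρ) := by
      rw [abs_of_pos ha, abs_of_pos hb, hab,
        Real.mul_rpow hk.le hb.le]
      ring
    -- combine sub/supersolution inequalities
    have hB := hvsup ρ hle hlt
    have hA := husub ρ hle hlt
    have hcomb : -(|deriv u ρ| ^ (p - 2) * Lrad N p u ρ) - V ρ * (|u ρ| ^ (p - 2) * u ρ) -
        (k ^ (p - 2) * k) *
          (-(|deriv v ρ| ^ (p - 2) * Lrad N p v ρ) - V ρ * (|v ρ| ^ (p - 2) * v ρ)) < 0 := by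
      have hkk : 0 < k ^ (p - 2) * k := mul_pos hkp2 hk
      rcases hstrict with hs | hs
      · have h1 := hs ρ hle hlt
        have h2 : 0 ≤ (k ^ (p - 2) * k) *
            (-(|deriv v ρ| ^ (p - 2) * Lrad N p v ρ) - V ρ * (|v ρ| ^ (p - 2) * v ρ)) :=
          mul_nonneg hkk.le hB
        linarith
      · have h1 := hs ρ hle hlt
        have h2 : 0 < (k ^ (p - 2) * k) *
            (-(|deriv v ρ| ^ (p - 2) * Lrad N p v ρ) - V ρ * (|v ρ| ^ (p - 2) * v ρ)) :=
          mul_pos hkk h1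
        linarith
    rw [hr1, hr2] at hcomb
    simp only [Lrad] at hcomb
    rw [ha1] at hcomb
    have hfact : -(k ^ (p - 2) * |deriv v ρ| ^ (p - 2) *
          ((p - 1) * deriv (deriv u) ρ + (((N:ℝ) - 1) / ρ) * (k * deriv v ρ))) -
        V ρ * (k ^ (p - 2) * k * (|v ρ| ^ (p - 2) * v ρ)) -
        k ^ (p - 2) * k *
          (-(|deriv v ρ| ^ (p - 2) *
              ((p - 1) * deriv (deriv v) ρ + (((N:ℝ) - 1) / ρ) * deriv v ρ)) -
            V ρ * (|v ρ| ^ (p - 2) * v ρ)) =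
        -(k ^ (p - 2) * |deriv v ρ| ^ (p - 2) * (p - 1) *
          (deriv (deriv u) ρ - k * deriv (deriv v) ρ)) := by ring
    rw [hfact] at hcomb
    have hpos : 0 < k ^ (p - 2) * |deriv v ρ| ^ (p - 2) * (p - 1) :=
      mul_pos (mul_pos hkp2 hb1p) (by linarith)
    have hsecond : 0 < deriv (deriv u) ρ - k * deriv (deriv v) ρ := by
      by_contra h
      push_neg at h
      nlinarith
    have hfinal : 0 < deriv (deriv u) ρ * v ρ - u ρ * deriv (deriv v) ρ := by
      have : deriv (deriv u) ρ * v ρ - u ρ * deriv (deriv v) ρ =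
          v ρ * (deriv (deriv u) ρ - k * deriv (deriv v) ρ) := by rw [hab]; ring
      rw [this]
      exact mul_pos hb hsecond
    -- compute the second derivative of f at ρ
    have heq : deriv f =ᶠ[nhds ρ] g :=
      Filter.eventuallyEq_of_mem (hUopen.mem_nhds hρ) (fun r hr => hderivf r hr)
    have hval : deriv (deriv f) ρ =
        ((deriv (deriv u) ρ * v ρ - u ρ * deriv (deriv v) ρ) * (v ρ) ^ 2 -
          (deriv u ρ * v ρ - u ρ * deriv v ρ) * (2 * v ρ * deriv v ρ)) / ((v ρ) ^ 2) ^ 2 := by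
      rw [heq.deriv_eq]
      exact (hDg ρ hρ).deriv
    rw [hval, hc, zero_mul, sub_zero]
    exact div_pos (mul_pos hfinal (pow_pos hb 2)) (pow_pos (pow_pos hb 2) 2)
  constructor
  · intro ρ h1 h2 hcrit
    exact key ρ ⟨h1, h2⟩ hcrit
  · intro ρ h1 h2 hmax
    have hρ : ρ ∈ U := ⟨h1, h2⟩
    have hdf0 : deriv f ρ = 0 := hmax.deriv_eq_zero
    have hpos : 0 < deriv (deriv f) ρ := key ρ hρ hdf0
    have hgρ0 : g ρ = 0 := by rw [← hderivf ρ hρ]; exact hdf0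
    have heq : deriv f =ᶠ[nhds ρ] g :=
      Filter.eventuallyEq_of_mem (hUopen.mem_nhds hρ) (fun r hr => hderivf r hr)
    have hgd : HasDerivAt g (deriv (deriv f) ρ) ρ := by
      rw [heq.deriv_eq, (hDg ρ hρ).deriv]
      exact hDg ρ hρ
    -- g is eventually positive to the right of ρ
    have hslope := hasDerivAt_iff_tendsto_slope.mp hgd
    have hev : ∀ᶠ x in nhdsWithin ρ {ρ}ᶜ, 0 < slope g ρ x :=
      hslope.eventually (eventually_gt_nhds hpos)
    have hev' : ∀ᶠ x in nhdsWithin ρ (Set.Ioi ρ), 0 < g x := by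
      have h1' : ∀ᶠ x in nhdsWithin ρ (Set.Ioi ρ), 0 < slope g ρ x :=
        hev.filter_mono (nhdsWithin_mono ρ (fun x hx => ne_of_gt hx))
      have h2' : ∀ᶠ x in nhdsWithin ρ (Set.Ioi ρ), x ∈ Set.Ioi ρ :=
        self_mem_nhdsWithin
      filter_upwards [h1', h2'] with x hx hxρ
      have hxρ' : (0:ℝ) < x - ρ := sub_pos.mpr hxρ
      rw [slope_def_field, hgρ0, sub_zero] at hx
      have : 0 < g x / (x - ρ) := hx
      rcases div_pos_iff.mp this with ⟨h, _⟩ | ⟨_, h⟩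
      · exact h
      · linarith
    have hevU : ∀ᶠ x in nhdsWithin ρ (Set.Ioi ρ), x ∈ U :=
      mem_nhdsWithin_of_mem_nhds (hUopen.mem_nhds hρ)
    have hevM : ∀ᶠ x in nhdsWithin ρ (Set.Ioi ρ), f x ≤ f ρ :=
      hmax.filter_mono nhdsWithin_le_nhds
    have hall := hev'.and (hevU.and hevM)
    obtain ⟨m, hm, hsub⟩ := mem_nhdsGT_iff_exists_Ioo_subset.mp hall
    set x : ℝ := (ρ + m) / 2 with hxdef
    have hmρ : ρ < m := hm
    have hx1 : ρ < x := by rw [hxdef]; linarith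
    have hx2 : x < m := by rw [hxdef]; linarith
    have hxIoo : x ∈ Set.Ioo ρ m := ⟨hx1, hx2⟩
    have hIccU : Set.Icc ρ x ⊆ U := by
      intro y hy
      rcases eq_or_lt_of_le hy.1 with h | h
      · exact h ▸ hρ
      · exact (hsub ⟨h, lt_of_le_of_lt hy.2 hx2⟩).2.1
    have hcont : ContinuousOn f (Set.Icc ρ x) := fun y hy =>
      ((hfd y (hIccU hy)).continuousAt).continuousWithinAt
    have hdiff : ∀ y ∈ Set.Ioo ρ x, HasDerivAt f (g y) y := fun y hy =>
      hfd y (hIccU ⟨hy.1.le, hy.2.le⟩)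
    obtain ⟨c, hc, hgc⟩ := exists_hasDerivAt_eq_slope f g hx1 hcont hdiff
    have hcIoo : c ∈ Set.Ioo ρ m := ⟨hc.1, lt_trans hc.2 hx2⟩
    have hgcpos : 0 < g c := (hsub hcIoo).1
    have hfx : f x ≤ f ρ := (hsub hxIoo).2.2
    rw [hgc] at hgcpos
    rcases div_pos_iff.mp hgcpos with ⟨h, _⟩ | ⟨_, h⟩
    · linarith
    · linarith
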